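/- arXiv:1911.08722 — 6 statements merged into one kernel-verified Lean document; each statement's English description precedes it below -/
import Mathlib

section
/- Let k ≥ 0 and let P_{2k+1} ∈ ℚ[X,Y] be the polynomial with t^{2k+1} + s^{2k+1} = P_{2k+1}(t+s, t²+s²). Then every monomial X^i Y^j appearing in P_{2k+1} satisfies i + 2j = 2k+1, the coefficient of X Y^k in P_{2k+1} equals (2k+1)/2^k, and every other monomial X^i Y^j appearing in P_{2k+1} has total degree i + j ≥ k + 2. -/
open MvPolynomial

noncomputable def Qp : ℕ → MvPolynomial (Fin 2) ℚ
  | 0 => C 2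
  | 1 => X 0
  | (n+2) => X 0 * Qp (n+1) - C (1/2 : ℚ) * (X 0 ^ 2 - X 1) * Qp n

lemma Qp_add_two (n : ℕ) :
    Qp (n+2) = X 0 * Qp (n+1) - C (1/2 : ℚ) * (X 0 ^ 2 - X 1) * Qp n := rfl

lemma aeval_Qp : ∀ m : ℕ, ∀ t s : ℝ,
    MvPolynomial.aeval ![t + s, t ^ 2 + s ^ 2] (Qp m) = t ^ m + s ^ m := by
  intro m
  induction m using Nat.twoStepInduction with
  | zero => intro t s; simp [Qp]; norm_num
  | one => intro t s; simp [Qp]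
  | more n ih1 ih2 =>
    intro t s
    rw [Qp_add_two]
    simp only [map_sub, map_mul, map_pow, aeval_X, map_ofNat, Matrix.cons_val_zero,
      Matrix.cons_val_one, Matrix.head_cons, ih1 t s, ih2 t s, map_div₀, map_one, map_ofNat,
      MvPolynomial.aeval_C]
    ring

lemma IsWeightedHomogeneous.sub' {σ M : Type*} [AddCommMonoid M] {w : σ → M} {m : M}
    {p q : MvPolynomial σ ℚ} (hp : p.IsWeightedHomogeneous w m)
    (hq : q.IsWeightedHomogeneous w m) : (p - q).IsWeightedHomogeneous w m := by
  intro d hd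
  rw [coeff_sub] at hd
  by_cases h : coeff d p = 0
  · refine hq fun h' => hd ?_
    rw [h, h', sub_zero]
  · exact hp h

lemma Qp_hom : ∀ m : ℕ, (Qp m).IsWeightedHomogeneous ![1, 2] m := by
  intro m
  induction m using Nat.twoStepInduction with
  | zero => exact isWeightedHomogeneous_C _ _
  | one => simpa [Qp] using isWeightedHomogeneous_X ℚ ![1,2] 0
  | more n ih1 ih2 =>
    rw [Qp_add_two]
    apply IsWeightedHomogeneous.sub'
    · have := (isWeightedHomogeneous_X ℚ ![1,2] 0).mul ih2
      simp only [Matrix.cons_val_zero] at this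
      rwa [show 1 + (n+1) = n+2 by omega] at this
    · have hx0 : (X 0 ^ 2 - X 1 : MvPolynomial (Fin 2) ℚ).IsWeightedHomogeneous ![1,2] 2 := by
        apply IsWeightedHomogeneous.sub'
        · have := (isWeightedHomogeneous_X ℚ ![1,2] 0).mul (isWeightedHomogeneous_X ℚ ![1,2] 0)
          simpa [sq] using this
        · simpa using isWeightedHomogeneous_X ℚ ![1,2] 1
      have := ((isWeightedHomogeneous_C ![1,2] (1/2 : ℚ)).mul hx0).mul ih1
      have h2 : (0 : ℕ) + 2 + n = n + 2 := by omega
      rwa [h2] at this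

lemma weight_eq (d : Fin 2 →₀ ℕ) : (Finsupp.weight ![1,2]) d = d 0 + 2 * d 1 := by
  have : d = Finsupp.single 0 (d 0) + Finsupp.single 1 (d 1) := by
    ext i
    fin_cases i <;> simp
  rw [this, map_add]
  simp [Finsupp.weight_apply, mul_comm]
lemma coeff_X0_mul_zero (p : MvPolynomial (Fin 2) ℚ) (j : ℕ) :
    coeff (Finsupp.single 1 j) (X 0 * p) = 0 := by
  rw [coeff_X_mul']
  simp [Finsupp.single_apply]

lemma coeff_Qp : ∀ k : ℕ,
    coeff (Finsupp.single 1 k) (Qp (2*k)) = 2 / 2^k ∧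
    coeff (Finsupp.single 0 1 + Finsupp.single 1 k) (Qp (2*k+1)) = (2*k+1 : ℚ) / 2^k := by
  intro k
  induction k with
  | zero =>
    constructor
    · simp [Qp]
    · simp only [Finsupp.single_zero, add_zero, Nat.mul_zero, Nat.zero_add]
      simp [Qp, coeff_X]
  | succ k ih =>
    obtain ⟨ihe, iho⟩ := ih
    have hrw2 : 2 * (k+1) = (2*k) + 2 := by ring
    have hrw3 : 2 * (k+1) + 1 = (2*k+1) + 2 := by ring
    have hsplit : (Finsupp.single 1 (k+1) : Fin 2 →₀ ℕ)
        = Finsupp.single 1 1 + Finsupp.single 1 k := by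
      rw [← Finsupp.single_add]; ring_nf
    have key1 : ∀ p : MvPolynomial (Fin 2) ℚ,
        coeff (Finsupp.single 1 (k+1)) (C (1/2 : ℚ) * (X 0 ^ 2 - X 1) * p)
          = -(1/2) * coeff (Finsupp.single 1 k) p := by
      intro p
      rw [mul_assoc, coeff_C_mul, sub_mul, coeff_sub, sq, mul_assoc,
        coeff_X0_mul_zero, hsplit, coeff_X_mul]
      ring
    have heven : coeff (Finsupp.single 1 (k+1)) (Qp (2*(k+1))) = 2 / 2^(k+1) := by
      rw [hrw2, Qp_add_two, coeff_sub, coeff_X0_mul_zero, key1, ihe]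
      rw [pow_succ]
      ring
    refine ⟨heven, ?_⟩
    have hsplit2 : (Finsupp.single 0 1 + Finsupp.single 1 (k+1) : Fin 2 →₀ ℕ)
        = Finsupp.single 0 1 + Finsupp.single 1 (k+1) := rfl
    have e1 : coeff (Finsupp.single 0 1 + Finsupp.single 1 (k+1))
        (X 0 * Qp (2*(k+1))) = 2 / 2^(k+1) := by
      rw [coeff_X_mul, heven]
    have e2 : coeff (Finsupp.single 0 1 + Finsupp.single 1 (k+1))
        (C (1/2 : ℚ) * (X 0 ^ 2 - X 1) * Qp (2*k+1))
          = -(1/2) * ((2*k+1 : ℚ) / 2^k) := by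
      rw [mul_assoc, coeff_C_mul, sub_mul, coeff_sub, sq, mul_assoc]
      have hx2 : coeff (Finsupp.single 0 1 + Finsupp.single 1 (k+1))
          (X 0 * (X 0 * Qp (2*k+1))) = 0 := by
        rw [coeff_X_mul, coeff_X0_mul_zero]
      have hx1 : coeff (Finsupp.single 0 1 + Finsupp.single 1 (k+1))
          (X 1 * Qp (2*k+1)) = (2*k+1 : ℚ) / 2^k := by
        have : (Finsupp.single 0 1 + Finsupp.single 1 (k+1) : Fin 2 →₀ ℕ)
            = Finsupp.single 1 1 + (Finsupp.single 0 1 + Finsupp.single 1 k) := by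
          rw [hsplit]; abel
        rw [this, coeff_X_mul, iho]
      rw [hx1, hx2]
      ring
    rw [hrw3]
    rw [show (2*k+1)+2 = (2*k+1)+2 from rfl, Qp_add_two, coeff_sub]
    rw [show (2*k+1)+1 = 2*(k+1) by ring, e1, e2]
    push_cast
    rw [pow_succ]
    field_simp
    ring
lemma vanish_eq_zero (D : MvPolynomial (Fin 2) ℚ)
    (h : ∀ t s : ℝ, MvPolynomial.aeval ![t + s, t ^ 2 + s ^ 2] D = 0) : D = 0 := by
  set D' : MvPolynomial (Fin 2) ℝ := MvPolynomial.map (algebraMap ℚ ℝ) D with hD'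
  have hzero : ∀ t s : ℝ, eval ![t + s, t ^ 2 + s ^ 2] D' = 0 := by
    intro t s
    rw [hD', eval_map, ← aeval_def, h]
  have hreg : ∀ x y : ℝ, x ^ 2 ≤ 2 * y → eval ![x, y] D' = 0 := by
    intro x y hxy
    set d := Real.sqrt (2 * y - x ^ 2) with hd
    have hd2 : d ^ 2 = 2 * y - x ^ 2 := Real.sq_sqrt (by linarith)
    have h1 : (x + d) / 2 + (x - d) / 2 = x := by ring
    have h2 : ((x + d) / 2) ^ 2 + ((x - d) / 2) ^ 2 = y := by
      have : ((x + d) / 2) ^ 2 + ((x - d) / 2) ^ 2 = (x ^ 2 + d ^ 2) / 2 := by ring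
      rw [this, hd2]; ring
    have := hzero ((x + d) / 2) ((x - d) / 2)
    rwa [h1, h2] at this
  have hall : ∀ x y : ℝ, eval ![x, y] D' = 0 := by
    intro x
    set p : Polynomial ℝ :=
      eval₂ (Polynomial.C : ℝ →+* Polynomial ℝ) ![Polynomial.C x, Polynomial.X] D' with hp
    have hev : ∀ y : ℝ, Polynomial.eval y p = eval ![x, y] D' := by
      intro y
      have := eval₂_comp_left (Polynomial.evalRingHom y)
        (Polynomial.C : ℝ →+* Polynomial ℝ) ![Polynomial.C x, Polynomial.X] D'
      have hc : (Polynomial.evalRingHom y).comp (Polynomial.C : ℝ →+* Polynomial ℝ)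
          = RingHom.id ℝ := by ext a; simp
      have hg : (⇑(Polynomial.evalRingHom y) ∘ ![Polynomial.C x, Polynomial.X]) = ![x, y] := by
        funext i; fin_cases i <;> simp
      rw [hc, hg, eval₂_id] at this
      exact this
    have hroots : {y : ℝ | p.IsRoot y}.Infinite := by
      apply (Set.Ici_infinite (x ^ 2 / 2)).mono
      intro y hy
      simp only [Set.mem_Ici] at hy
      have hxy : x ^ 2 ≤ 2 * y := by linarith
      show p.IsRoot y
      rw [Polynomial.IsRoot, hev y]
      exact hreg x y hxy
    have hp0 : p = 0 := Polynomial.eq_zero_of_infinite_isRoot p hroots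
    intro y
    rw [← hev y, hp0, Polynomial.eval_zero]
  have hD0 : D' = 0 := by
    apply MvPolynomial.funext
    intro v
    have : (![v 0, v 1] : Fin 2 → ℝ) = v := by funext i; fin_cases i <;> rfl
    rw [map_zero, ← this]
    exact hall (v 0) (v 1)
  exact MvPolynomial.map_injective (algebraMap ℚ ℝ) (algebraMap ℚ ℝ).injective
    (by rw [← hD', hD0, map_zero])

lemma finsupp_eq (d : Fin 2 →₀ ℕ) (k : ℕ) (h0 : d 0 = 1) (h1 : d 1 = k) :
    d = Finsupp.single 0 1 + Finsupp.single 1 k := by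
  ext i
  fin_cases i <;> simp [h0, h1]

theorem odd_power_sum_polynomial_structure (k : ℕ) (P : MvPolynomial (Fin 2) ℚ)
    (hP : ∀ t s : ℝ,
      t ^ (2 * k + 1) + s ^ (2 * k + 1) =
        MvPolynomial.aeval ![t + s, t ^ 2 + s ^ 2] P) :
    (∀ d ∈ P.support, d 0 + 2 * d 1 = 2 * k + 1) ∧
    MvPolynomial.coeff (Finsupp.single 0 1 + Finsupp.single 1 k) P
      = (2 * k + 1 : ℚ) / 2 ^ k ∧
    (∀ d ∈ P.support, d ≠ Finsupp.single 0 1 + Finsupp.single 1 k →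
      k + 2 ≤ d 0 + d 1) := by
  have hPQ : P = Qp (2 * k + 1) := by
    have : P - Qp (2 * k + 1) = 0 := by
      apply vanish_eq_zero
      intro t s
      rw [map_sub, aeval_Qp (2 * k + 1) t s, ← hP t s, sub_self]
    have := sub_eq_zero.mp this
    exact this
  have hhom : ∀ d ∈ P.support, d 0 + 2 * d 1 = 2 * k + 1 := by
    intro d hd
    rw [mem_support_iff] at hd
    have := Qp_hom (2 * k + 1) (hPQ ▸ hd)
    rwa [weight_eq] at this
  refine ⟨hhom, ?_, ?_⟩
  · rw [hPQ]
    have := (coeff_Qp k).2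
    convert this using 2
  · intro d hd hne
    have h1 := hhom d hd
    have hk : d 1 ≠ k := by
      intro hdk
      exact hne (finsupp_eq d k (by omega) hdk)
    omega
end

section
/- Let k ≥ 0 and let P_{2k+2} ∈ ℚ[X,Y] be the polynomial with t^{2k+2} + s^{2k+2} = P_{2k+2}(t+s, t²+s²). Then every monomial X^i Y^j appearing in P_{2k+2} satisfies i + 2j = 2k+2, the coefficient of Y^{k+1} in P_{2k+2} equals 1/2^k, and every other monomial X^i Y^j appearing in P_{2k+2} has total degree i + j ≥ k + 2. -/
open MvPolynomial Finsupp Finset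

noncomputable section

namespace EvenPowerAux

abbrev R2 := MvPolynomial (Fin 2) ℚ

lemma esymm1_eq : esymm (Fin 2) ℚ 1 = X 0 + X 1 := by
  rw [esymm_one, Fin.sum_univ_two]

lemma esymm2_eq : esymm (Fin 2) ℚ 2 = X 0 * X 1 := by
  have h : Finset.powersetCard 2 (Finset.univ : Finset (Fin 2)) = {Finset.univ} := by
    have h2 : (Finset.univ : Finset (Fin 2)).card = 2 := by simp
    rw [← h2]
    exact Finset.powersetCard_self _
  rw [esymm, h, Finset.sum_singleton, Fin.prod_univ_two]

lemma C_half_two : (2 : R2) * C (1/2 : ℚ) = 1 := by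
  rw [two_mul, ← C_add]
  norm_num

/-- injectivity of the substitution X ↦ X0+X1, Y ↦ X0²+X1² -/
lemma phi_injective :
    Function.Injective (aeval ![X 0 + X 1, X 0 ^ 2 + X 1 ^ 2] : R2 →ₐ[ℚ] R2) := by
  set τ : R2 →ₐ[ℚ] R2 := aeval ![X 0, X 0 ^ 2 - (X 1 + X 1)] with hτ
  set σ' : R2 →ₐ[ℚ] R2 := aeval ![X 0, C (1/2 : ℚ) * (X 0 ^ 2 - X 1)] with hσ
  have hστ : σ'.comp τ = AlgHom.id ℚ R2 := by
    apply MvPolynomial.algHom_ext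
    intro i
    fin_cases i
    · simp [hτ, hσ]
    · rw [AlgHom.comp_apply, AlgHom.id_apply]
      show σ' (τ (X 1)) = X 1
      simp only [hτ, hσ, aeval_X, map_sub, map_add, map_mul, map_pow,
        Matrix.cons_val_zero, Matrix.cons_val_one, Matrix.head_cons]
      linear_combination (X 1 - X 0 ^ 2 : R2) * C_half_two
  have hτinj : Function.Injective τ := by
    intro p q h
    have h2 := congrArg σ' h
    rwa [← AlgHom.comp_apply, ← AlgHom.comp_apply, hστ, AlgHom.id_apply,
      AlgHom.id_apply] at h2
  have hE : Function.Injective (esymmAlgHom (Fin 2) ℚ 2) :=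
    esymmAlgHom_fin_injective ℚ le_rfl
  have hcomp : ((symmetricSubalgebra (Fin 2) ℚ).val.comp
      ((esymmAlgHom (Fin 2) ℚ 2).comp τ)) =
      (aeval ![X 0 + X 1, X 0 ^ 2 + X 1 ^ 2] : R2 →ₐ[ℚ] R2) := by
    apply MvPolynomial.algHom_ext
    intro i
    fin_cases i
    · simp [hτ, esymmAlgHom_apply, esymm1_eq, esymm2_eq, map_sub, map_add, map_pow,
        map_mul]
    · simp [hτ, esymmAlgHom_apply, esymm1_eq, esymm2_eq, map_sub, map_add, map_pow,
        map_mul]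
      ring
  rw [← hcomp]
  exact (Subtype.val_injective.comp hE).comp hτinj

end EvenPowerAux

end

theorem even_power_sum_polynomial_structure (k : ℕ) (P : MvPolynomial (Fin 2) ℚ)
    (hP : ∀ t s : ℝ,
      t ^ (2 * k + 2) + s ^ (2 * k + 2) =
        MvPolynomial.aeval ![t + s, t ^ 2 + s ^ 2] P) :
    (∀ d ∈ P.support, d 0 + 2 * d 1 = 2 * k + 2) ∧
    MvPolynomial.coeff (Finsupp.single 1 (k + 1)) P = (1 : ℚ) / 2 ^ k ∧
    (∀ d ∈ P.support, d ≠ Finsupp.single 1 (k + 1) →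
      k + 2 ≤ d 0 + d 1) := by
  classical
  set u : Fin 2 → MvPolynomial (Fin 2) ℚ := ![X 0 + X 1, X 0 ^ 2 + X 1 ^ 2] with hu
  set B : MvPolynomial (Fin 2) ℚ := X 0 ^ (2*k+2) + X 1 ^ (2*k+2) with hB
  set w : Fin 2 → ℕ := ![1, 2] with hw
  have hweight : ∀ d : Fin 2 →₀ ℕ, Finsupp.weight w d = d 0 * 1 + d 1 * 2 := by
    intro d
    rw [Finsupp.weight_apply, Finsupp.sum_fintype _ _ (by intro i; simp),
      Fin.sum_univ_two]
    simp [hw, smul_eq_mul]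
  -- Step 1: the polynomial identity over ℚ
  have hAB : MvPolynomial.aeval u P = B := by
    apply MvPolynomial.map_injective (algebraMap ℚ ℝ)
      (algebraMap ℚ ℝ).injective
    apply MvPolynomial.funext
    intro x
    rw [MvPolynomial.eval_map, MvPolynomial.eval_map, ← MvPolynomial.aeval_def,
      ← MvPolynomial.aeval_def, MvPolynomial.comp_aeval_apply]
    have hv : (fun i => MvPolynomial.aeval x (u i)) =
        ![x 0 + x 1, (x 0) ^ 2 + (x 1) ^ 2] := by
      funext i
      fin_cases i <;> simp [hu]
    rw [hv, ← hP (x 0) (x 1)]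
    simp [hB]
  -- Step 2: weighted homogeneity of P
  have hsupp : ∀ d ∈ P.support, (Finsupp.weight w d : ℕ) = 2 * k + 2 := by
    by_contra hcon
    push_neg at hcon
    obtain ⟨d₀, hd₀, hne⟩ := hcon
    set n := (Finsupp.weight w d₀ : ℕ) with hn
    have hterm : ∀ d : Fin 2 →₀ ℕ, ∀ c : ℚ,
        (MvPolynomial.aeval u (MvPolynomial.monomial d c)).IsHomogeneous
          (Finsupp.weight w d) := by
      intro d c
      rw [MvPolynomial.aeval_monomial,
        Finsupp.prod_fintype _ _ (fun i => pow_zero _), Fin.prod_univ_two,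
        ← mul_assoc]
      have h0 : (u 0).IsHomogeneous 1 := by
        have := (MvPolynomial.isHomogeneous_X_pow (R := ℚ) (0 : Fin 2) 1).add
          (MvPolynomial.isHomogeneous_X_pow (R := ℚ) (1 : Fin 2) 1)
        simpa [hu, pow_one] using this
      have h1 : (u 1).IsHomogeneous 2 := by
        have := (MvPolynomial.isHomogeneous_X_pow (R := ℚ) (0 : Fin 2) 2).add
          (MvPolynomial.isHomogeneous_X_pow (R := ℚ) (1 : Fin 2) 2)
        simpa [hu] using this
      have hCc : ((algebraMap ℚ (MvPolynomial (Fin 2) ℚ)) c).IsHomogeneous 0 := by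
        rw [MvPolynomial.algebraMap_eq]
        exact MvPolynomial.isHomogeneous_C _ _
      have hh := (hCc.mul (h0.pow (d 0))).mul (h1.pow (d 1))
      have harr : 0 + 1 * (d 0) + 2 * (d 1) = (Finsupp.weight w d : ℕ) := by
        rw [hweight]; ring
      rwa [harr] at hh
    have hBhom : B.IsHomogeneous (2*k+2) := by
      rw [hB]
      exact (MvPolynomial.isHomogeneous_X_pow (R := ℚ) (0 : Fin 2) (2*k+2)).add
        (MvPolynomial.isHomogeneous_X_pow (R := ℚ) (1 : Fin 2) (2*k+2))
    have hcompB : MvPolynomial.homogeneousComponent n B = 0 := by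
      rw [MvPolynomial.homogeneousComponent_of_mem hBhom, if_neg hne]
    have hdecomp : B = ∑ d ∈ P.support,
        MvPolynomial.aeval u (MvPolynomial.monomial d (MvPolynomial.coeff d P)) := by
      rw [← hAB]
      conv_lhs => rw [P.as_sum]
      rw [map_sum]
    have hcompsum : MvPolynomial.homogeneousComponent n B =
        ∑ d ∈ P.support with (Finsupp.weight w d : ℕ) = n,
          MvPolynomial.aeval u (MvPolynomial.monomial d (MvPolynomial.coeff d P)) := by
      rw [hdecomp, map_sum, Finset.sum_filter]
      apply Finset.sum_congr rfl
      intro d _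
      rw [MvPolynomial.homogeneousComponent_of_mem (hterm d _)]
      by_cases h : (Finsupp.weight w d : ℕ) = n
      · rw [if_pos h.symm, if_pos h]
      · rw [if_neg (fun hh => h hh.symm), if_neg h]
    have hker : MvPolynomial.aeval u (MvPolynomial.weightedHomogeneousComponent w n P)
        = 0 := by
      rw [MvPolynomial.weightedHomogeneousComponent_apply, map_sum, ← hcompsum, hcompB]
    have hzero : MvPolynomial.weightedHomogeneousComponent w n P = 0 := by
      apply EvenPowerAux.phi_injective
      rw [show (![X 0 + X 1, X 0 ^ 2 + X 1 ^ 2] : Fin 2 → MvPolynomial (Fin 2) ℚ) = u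
        from rfl, hker, map_zero]
    have hco : MvPolynomial.coeff d₀ (MvPolynomial.weightedHomogeneousComponent w n P)
        = MvPolynomial.coeff d₀ P := by
      rw [MvPolynomial.coeff_weightedHomogeneousComponent, if_pos hn.symm]
    rw [hzero, MvPolynomial.coeff_zero] at hco
    exact (MvPolynomial.mem_support_iff.mp hd₀) hco.symm
  have hsupp' : ∀ d ∈ P.support, d 0 + 2 * d 1 = 2 * k + 2 := by
    intro d hd
    have := hsupp d hd
    rw [hweight] at this
    omega
  have hsingle : ∀ d : Fin 2 →₀ ℕ, d = Finsupp.single 1 (k+1) ↔ d 0 = 0 ∧ d 1 = k + 1 := by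
    intro d
    constructor
    · rintro rfl
      constructor <;> simp [Finsupp.single_apply]
    · rintro ⟨h0, h1⟩
      ext i
      fin_cases i <;> simp [Finsupp.single_apply, h0, h1]
  -- Step 3: the coefficient of Y^(k+1)
  have hcoeff : MvPolynomial.coeff (Finsupp.single 1 (k + 1)) P = (1 : ℚ) / 2 ^ k := by
    have h2' : MvPolynomial.aeval ![(0:ℚ), 2] P = 2 := by
      apply (algebraMap ℚ ℝ).injective
      have hcomp := MvPolynomial.comp_aeval_apply (Algebra.ofId ℚ ℝ)
        (f := ![(0:ℚ), 2]) P
      have hvec : (fun i => (Algebra.ofId ℚ ℝ) (![(0:ℚ), 2] i)) =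
          ![(1:ℝ) + -1, 1 ^ 2 + (-1) ^ 2] := by
        funext i
        fin_cases i <;> simp [Algebra.ofId_apply] <;> norm_num
      have hkey : (algebraMap ℚ ℝ) (MvPolynomial.aeval ![(0:ℚ), 2] P) =
          MvPolynomial.aeval ![(1:ℝ) + -1, 1 ^ 2 + (-1) ^ 2] P := by
        rw [show (algebraMap ℚ ℝ) (MvPolynomial.aeval ![(0:ℚ), 2] P) =
          (Algebra.ofId ℚ ℝ) (MvPolynomial.aeval ![(0:ℚ), 2] P) from rfl, hcomp, hvec]
      rw [hkey, ← hP 1 (-1)]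
      have hm1 : (-1:ℝ) ^ (2*k+2) = 1 := by
        rw [show 2*k+2 = 2*(k+1) by ring, pow_mul]
        norm_num
      rw [one_pow, hm1, map_ofNat]
      norm_num
    have heval : MvPolynomial.aeval ![(0:ℚ), 2] P =
        ∑ d ∈ P.support, MvPolynomial.coeff d P * ((0:ℚ) ^ (d 0) * 2 ^ (d 1)) := by
      rw [MvPolynomial.aeval_def, Algebra.algebraMap_self, MvPolynomial.eval₂_id,
        MvPolynomial.eval_eq']
      apply Finset.sum_congr rfl
      intro d _
      rw [Fin.prod_univ_two]
      simp
    have hsum : ∑ d ∈ P.support, MvPolynomial.coeff d P * ((0:ℚ) ^ (d 0) * 2 ^ (d 1))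
        = MvPolynomial.coeff (Finsupp.single 1 (k+1)) P * 2 ^ (k+1) := by
      rw [Finset.sum_eq_single (Finsupp.single 1 (k+1))]
      · simp [Finsupp.single_apply]
      · intro d hd hne
        have h0 : d 0 ≠ 0 := by
          intro h0
          apply hne
          rw [hsingle d]
          have := hsupp' d hd
          omega
        rw [zero_pow h0]
        ring
      · intro hnot
        rw [MvPolynomial.notMem_support_iff.mp hnot]
        ring
    rw [heval, hsum] at h2'
    have h2k : (2:ℚ) ^ (k+1) ≠ 0 := by positivity
    have hr : (1:ℚ)/2^k * 2^(k+1) = 2 := by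
      rw [pow_succ]
      field_simp
    exact mul_right_cancel₀ h2k (h2'.trans hr.symm)
  refine ⟨hsupp', hcoeff, ?_⟩
  intro d hd hne
  have h1 := hsupp' d hd
  have h2 : ¬ (d 0 = 0 ∧ d 1 = k + 1) := fun h => hne ((hsingle d).mpr h)
  omega
end

section
/- Let 0 < δ ≤ σ/10 and let a, b ∈ [0,1] with b − a ≥ σ > 0. Then there exists a constant c > 0 (independent of a, b, δ, σ) such that the image of [a, a+δ] × [b, b+δ] under Φ(t,s) = (t+s, t²+s²) contains the open ball of radius c·σ·δ centered at Φ(a + δ/2, b + δ/2). -/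
set_option maxHeartbeats 1600000 in
theorem image_of_transverse_square_contains_ball :
    ∃ c : ℝ, 0 < c ∧
      ∀ δ σ a b : ℝ, 0 < δ → δ ≤ σ / 10 → 0 < σ →
        a ∈ Set.Icc (0 : ℝ) 1 → b ∈ Set.Icc (0 : ℝ) 1 → σ ≤ b - a →
        Metric.ball
            ((fun q : ℝ × ℝ => (q.1 + q.2, q.1 ^ 2 + q.2 ^ 2)) (a + δ / 2, b + δ / 2))
            (c * σ * δ) ⊆
          (fun q : ℝ × ℝ => (q.1 + q.2, q.1 ^ 2 + q.2 ^ 2)) ''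
            (Set.Icc a (a + δ) ×ˢ Set.Icc b (b + δ)) := by
  refine ⟨1/100, by norm_num, ?_⟩
  intro δ σ a b hδ hδσ hσ ha hb hba
  obtain ⟨ha0, ha1⟩ := ha
  obtain ⟨hb0, hb1⟩ := hb
  rintro ⟨u, v⟩ hp
  rw [Metric.mem_ball, Prod.dist_eq, max_lt_iff] at hp
  obtain ⟨hu, hv⟩ := hp
  rw [Real.dist_eq] at hu hv
  simp only at hu hv
  have hσ1 : σ ≤ 1 := by linarith
  have hδ1 : δ ≤ 1/10 := by linarith
  have hu1 : u - (a + δ/2 + (b + δ/2)) < 1/100*σ*δ := (abs_lt.mp hu).2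
  have hu2 : -(1/100*σ*δ) < u - (a + δ/2 + (b + δ/2)) := (abs_lt.mp hu).1
  have hv1 : v - ((a + δ/2)^2 + (b + δ/2)^2) < 1/100*σ*δ := (abs_lt.mp hv).2
  have hv2 : -(1/100*σ*δ) < v - ((a + δ/2)^2 + (b + δ/2)^2) := (abs_lt.mp hv).1
  have hr : 1/100*σ*δ ≤ δ/100 := by have := mul_le_mul_of_nonneg_right hσ1 hδ.le; linarith
  have hσδ : 0 < σ*δ := mul_pos hσ hδ
  set D := 2*v - u^2 with hDdef
  set e := u - (a + δ/2 + (b + δ/2)) with hedef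
  set f := v - ((a + δ/2)^2 + (b + δ/2)^2) with hfdef
  set r := 1/100*σ*δ with hrdef
  have hrδ : r ≤ δ/100 := hr
  have hrs : r ≤ 1/1000 := by linarith
  have hrpos : 0 < r := by positivity
  have hesq : e^2 < r^2 := sq_lt_sq' hu2 hu1
  have hesq' : e^2 ≤ r/1000 := by
    have h3 : r*r ≤ (1/1000)*r := mul_le_mul_of_nonneg_right hrs hrpos.le
    calc e^2 ≤ r^2 := hesq.le
      _ = r*r := sq r
      _ ≤ (1/1000)*r := h3
      _ = r/1000 := by ring
  set u₀ := a + δ/2 + (b + δ/2) with hu0def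
  have hu0a : 0 ≤ u₀ := by simp only [hu0def]; linarith
  have hu0b : u₀ ≤ 21/10 := by simp only [hu0def]; linarith
  clear_value D e f r u₀
  have hue1 : u₀*e ≤ 21/10*r := by
    rcases le_or_gt e 0 with h | h
    · have h1 : u₀*e ≤ 0 := mul_nonpos_of_nonneg_of_nonpos hu0a h
      linarith
    · have h1 : u₀*e ≤ 21/10*e := mul_le_mul_of_nonneg_right hu0b h.le
      have h2 : (21/10:ℝ)*e ≤ 21/10*r := by linarith
      linarith
  have hue2 : -(21/10*r) ≤ u₀*e := by
    rcases le_or_gt 0 e with h | h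
    · have h1 : 0 ≤ u₀*e := mul_nonneg hu0a h
      linarith
    · have h1 : (21/10:ℝ)*e ≤ u₀*e := mul_le_mul_of_nonpos_right hu0b h.le
      have h2 : (21/10:ℝ)*(-r) ≤ 21/10*e := by linarith
      linarith
  have hDeq : D = (b-a)^2 + 2*f - 2*(u₀*e) - e^2 := by
    simp only [hDdef, hedef, hfdef, hu0def]; ring
  have hDlow : (b-a)^2 - 8*(σ*δ/100) ≤ D := by
    rw [hDeq]; linarith [sq_nonneg e]
  have hDhigh : D ≤ (b-a)^2 + 8*(σ*δ/100) := by
    rw [hDeq]; linarith [sq_nonneg e]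
  have hba2 : σ*σ ≤ (b-a)*(b-a) := mul_le_mul hba hba hσ.le (by linarith)
  have hσδ2 : σ*δ ≤ σ*(σ/10) := mul_le_mul_of_nonneg_left hδσ hσ.le
  have hDpos : (0:ℝ) ≤ D := by linarith [hDlow, hba2, hσδ2, sq_nonneg σ]
  set w := Real.sqrt D with hwdef
  have hw : w^2 = D := Real.sq_sqrt hDpos
  have hwnn : 0 ≤ w := Real.sqrt_nonneg D
  clear_value w
  have hmul : σ*δ ≤ (b-a)*δ := mul_le_mul_of_nonneg_right hba hδ.le
  have hδ2 : δ*δ ≤ σ*δ/10 := by linarith [mul_le_mul_of_nonneg_right hδσ hδ.le]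
  have hwhigh : w ≤ (b - a) + 8*δ/100 := by
    have h1 : D ≤ ((b - a) + 8*δ/100)^2 := by linarith [hmul, sq_nonneg δ, hDhigh]
    have h2 : w ≤ Real.sqrt (((b - a) + 8*δ/100)^2) := hwdef ▸ Real.sqrt_le_sqrt h1
    rwa [Real.sqrt_sq (by linarith)] at h2
  have hwlow : (b - a) - 8*δ/100 ≤ w := by
    have h1 : ((b - a) - 8*δ/100)^2 ≤ D := by linarith [hmul, hδ2, hDlow]
    have h2 : Real.sqrt (((b - a) - 8*δ/100)^2) ≤ w := hwdef ▸ Real.sqrt_le_sqrt h1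
    rwa [Real.sqrt_sq (by linarith)] at h2
  refine ⟨((u - w)/2, (u + w)/2), ?_, ?_⟩
  · constructor
    · constructor <;> simp only [] <;> linarith
    · constructor <;> simp only [] <;> linarith
  · simp only [Prod.mk.injEq]
    constructor
    · ring
    · linear_combination hw / 2 + hDdef / 2
end

section
/- Let N ≥ 1 and let z₁, …, z_N be complex numbers with z = z₁ + ⋯ + z_N. Then either |z| ≤ 10·max_{1 ≤ i ≤ N} |z_i|, or there exist indices i, j with |i − j| ≥ 2 such that |z| ≤ 2N·(|z_i|·|z_j|)^{1/2}. -/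
theorem broad_narrow_dichotomy (N : ℕ) (hN : 1 ≤ N) (z : Fin N → ℂ) :
    ‖∑ i, z i‖ ≤
        10 * (Finset.univ.sup' ⟨⟨0, hN⟩, Finset.mem_univ _⟩
          fun i => ‖z i‖) ∨
      ∃ i j : Fin N, 2 ≤ |(i : ℤ) - (j : ℤ)| ∧
        ‖∑ i, z i‖ ≤
          2 * N * Real.sqrt (‖z i‖ * ‖z j‖) := by
  set Z := ‖∑ i, z i‖ with hZdef
  set M := Finset.univ.sup' ⟨⟨0, hN⟩, Finset.mem_univ _⟩
      (fun i => ‖z i‖) with hMdef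
  by_cases hcase : Z ≤ 10 * M
  · exact Or.inl hcase
  push_neg at hcase
  right
  have hMle : ∀ i : Fin N, ‖z i‖ ≤ M := fun i =>
    Finset.le_sup' (fun i => ‖z i‖) (Finset.mem_univ i)
  have hM0 : 0 ≤ M := le_trans (norm_nonneg _) (hMle ⟨0, hN⟩)
  have hZ0 : 0 < Z := lt_of_le_of_lt (by positivity) hcase
  have hNr : (1 : ℝ) ≤ (N : ℝ) := by exact_mod_cast hN
  have hNr0 : (0 : ℝ) < (N : ℝ) := lt_of_lt_of_le one_pos hNr
  have hZsum : Z ≤ ∑ i, ‖z i‖ := norm_sum_le _ _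
  -- the big set S
  set S := Finset.univ.filter (fun i : Fin N => Z / (2 * N) ≤ ‖z i‖)
    with hSdef
  have hcompl : ∑ i ∈ Finset.univ \ S, ‖z i‖ ≤ Z / 2 := by
    calc ∑ i ∈ Finset.univ \ S, ‖z i‖
        ≤ ∑ _i ∈ Finset.univ \ S, Z / (2 * N) := by
          apply Finset.sum_le_sum
          intro i hi
          simp only [hSdef, Finset.mem_sdiff, Finset.mem_filter, Finset.mem_univ,
            true_and, not_le] at hi
          exact le_of_lt hi
      _ = (Finset.univ \ S).card * (Z / (2 * N)) := by
          rw [Finset.sum_const, nsmul_eq_mul]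
      _ ≤ N * (Z / (2 * N)) := by
          apply mul_le_mul_of_nonneg_right _ (by positivity)
          have : (Finset.univ \ S).card ≤ (Finset.univ : Finset (Fin N)).card :=
            Finset.card_le_card (Finset.sdiff_subset)
          simp only [Finset.card_univ, Fintype.card_fin] at this
          exact_mod_cast this
      _ = Z / 2 := by field_simp
  have hSsum : Z / 2 ≤ ∑ i ∈ S, ‖z i‖ := by
    have hsplit : ∑ i ∈ Finset.univ \ S, ‖z i‖ + ∑ i ∈ S, ‖z i‖
        = ∑ i, ‖z i‖ :=
      Finset.sum_sdiff (Finset.filter_subset _ _)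
    linarith
  have hScard : Z / 2 ≤ (S.card : ℝ) * M := by
    calc Z / 2 ≤ ∑ i ∈ S, ‖z i‖ := hSsum
      _ ≤ ∑ _i ∈ S, M := Finset.sum_le_sum (fun i _ => hMle i)
      _ = S.card * M := by rw [Finset.sum_const, nsmul_eq_mul]
  have hM0' : 0 < M := by
    rcases lt_or_eq_of_le hM0 with h | h
    · exact h
    · exfalso; rw [← h] at hScard; simp at hScard; linarith
  have hcard5 : (5 : ℝ) < (S.card : ℝ) := by
    have h1 : 5 * M < Z / 2 := by linarith
    have h2 : 5 * M < (S.card : ℝ) * M := lt_of_lt_of_le h1 hScard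
    exact (mul_lt_mul_iff_of_pos_right hM0').mp h2
  have hcard6 : 6 ≤ S.card := by exact_mod_cast hcard5
  -- pass to natural indices
  set T := S.image Fin.val with hTdef
  have hTcard : T.card = S.card := Finset.card_image_of_injective _ Fin.val_injective
  have hTne : T.Nonempty := by
    rw [← Finset.card_pos, hTcard]; omega
  set a := T.min' hTne with hadef
  set b := T.max' hTne with hbdef
  have hTsub : T ⊆ Finset.Icc a b := by
    intro x hx
    rw [Finset.mem_Icc]
    exact ⟨Finset.min'_le _ _ hx, Finset.le_max' _ _ hx⟩
  have hIcc : T.card ≤ b + 1 - a := by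
    have := Finset.card_le_card hTsub
    rwa [Nat.card_Icc] at this
  have hab : a + 2 ≤ b := by omega
  obtain ⟨j, hjS, hja⟩ := Finset.mem_image.mp (T.min'_mem hTne)
  obtain ⟨i, hiS, hib⟩ := Finset.mem_image.mp (T.max'_mem hTne)
  refine ⟨i, j, ?_, ?_⟩
  · have h1 : (i : ℕ) = b := hib
    have h2 : (j : ℕ) = a := hja
    have h1' : ((i : ℤ)) = (b : ℤ) := by exact_mod_cast h1
    have h2' : ((j : ℤ)) = (a : ℤ) := by exact_mod_cast h2
    rw [h1', h2', abs_of_nonneg (by omega)]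
    omega
  · simp only [hSdef, Finset.mem_filter, Finset.mem_univ, true_and] at hiS hjS
    have hq : 0 < Z / (2 * N) := by positivity
    have hsq : (Z / (2 * N)) ^ 2 ≤ ‖z i‖ * ‖z j‖ := by
      rw [sq]
      exact mul_le_mul hiS hjS (le_of_lt hq) (norm_nonneg _)
    have hsqrt : Z / (2 * N) ≤ Real.sqrt (‖z i‖ * ‖z j‖) := by
      have := Real.sqrt_le_sqrt hsq
      rwa [Real.sqrt_sq (le_of_lt hq)] at this
    calc Z = 2 * N * (Z / (2 * N)) := by field_simp
      _ ≤ 2 * N * Real.sqrt (‖z i‖ * ‖z j‖) := by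
          apply mul_le_mul_of_nonneg_left hsqrt (by positivity)
end

section
/- Let i ≥ 1 and let α, β be real numbers. For l = 0, …, i−1 define the homogeneous polynomials r_l(t,s) = (t + 2αs)^{i−1−l}(t + 2βs)^{l}. Then the i × i matrix M with entries M_{m,l} = (1/((i−1−m)!·m!)) · ∂^{i−1} r_l / ∂t^{i−1−m} ∂s^{m} (a constant, since r_l is homogeneous of degree i−1) has determinant (2β − 2α)^{i(i−1)/2}. In particular M is invertible whenever α ≠ β. -/
open MvPolynomial Finset

lemma single_eq_iff (j m j' m' : ℕ) :
    (Finsupp.single (0 : Fin 2) j + Finsupp.single 1 m = Finsupp.single 0 j' + Finsupp.single 1 m')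
      ↔ j = j' ∧ m = m' := by
  constructor
  · intro h
    refine ⟨?_, ?_⟩
    · have := DFunLike.congr_fun h 0; simpa using this
    · have := DFunLike.congr_fun h 1; simpa using this
  · rintro ⟨rfl, rfl⟩; rfl

lemma coeff_pow (a : ℝ) (n j m : ℕ) :
    MvPolynomial.coeff (Finsupp.single 0 j + Finsupp.single 1 m)
      ((X 0 + C a * X 1) ^ n : MvPolynomial (Fin 2) ℝ)
      = if j + m = n then (n.choose m : ℝ) * a ^ m else 0 := by
  rw [add_pow, MvPolynomial.coeff_sum]
  have hterm : ∀ k ∈ range (n + 1),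
      MvPolynomial.coeff (Finsupp.single 0 j + Finsupp.single 1 m)
        ((X 0 : MvPolynomial (Fin 2) ℝ) ^ k * (C a * X 1) ^ (n - k) * (n.choose k : MvPolynomial (Fin 2) ℝ))
      = if j = k ∧ m = n - k then (n.choose k : ℝ) * a ^ (n - k) else 0 := by
    intro k _
    have hmon : ((X 0 : MvPolynomial (Fin 2) ℝ) ^ k * (C a * X 1) ^ (n - k) * (n.choose k : MvPolynomial (Fin 2) ℝ))
        = monomial (Finsupp.single 0 k + Finsupp.single 1 (n - k)) ((n.choose k : ℝ) * a ^ (n - k)) := by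
      rw [mul_pow, ← C_pow, X_pow_eq_monomial, X_pow_eq_monomial]
      rw [show ((n.choose k : MvPolynomial (Fin 2) ℝ)) = C ((n.choose k : ℝ)) by simp]
      simp only [C_apply, monomial_mul]
      congr 1
      · simp
      · ring
    rw [hmon, coeff_monomial]
    by_cases hc : j = k ∧ m = n - k
    · rw [if_pos, if_pos hc]; rw [single_eq_iff]; tauto
    · rw [if_neg, if_neg hc]; rw [single_eq_iff]; tauto
  rw [Finset.sum_congr rfl hterm]
  by_cases h : j + m = n
  · rw [if_pos h, Finset.sum_eq_single j]
    · rw [if_pos ⟨rfl, by omega⟩]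
      rw [show n - j = m by omega,
        show n.choose j = n.choose m from by
          rw [show m = n - j by omega]; exact (Nat.choose_symm (by omega)).symm]
    · intro k _ hk
      rw [if_neg]; rintro ⟨rfl, -⟩; exact hk rfl
    · intro hj; exact absurd (Finset.mem_range.2 (by omega)) hj
  · rw [if_neg h]
    refine Finset.sum_eq_zero fun k hk => ?_
    rw [if_neg]
    rintro ⟨rfl, rfl⟩
    exact h (by have := Finset.mem_range.1 hk; omega)

lemma coeff_X1pow_mul (a : ℝ) (n m k : ℕ) (hm : m ≤ n) :
    MvPolynomial.coeff (Finsupp.single 0 (n - m) + Finsupp.single 1 m)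
      ((X 1) ^ k * (X 0 + C a * X 1) ^ (n - k) : MvPolynomial (Fin 2) ℝ)
      = if k ≤ m then ((n - k).choose (m - k) : ℝ) * a ^ (m - k) else 0 := by
  by_cases hc : k ≤ m
  · have hsplit : (Finsupp.single (0 : Fin 2) (n - m) + Finsupp.single 1 m)
        = Finsupp.single 1 k + (Finsupp.single 0 (n - m) + Finsupp.single 1 (m - k)) := by
      ext x
      fin_cases x <;> simp [Finsupp.single_apply] <;> omega
    rw [hsplit, X_pow_eq_monomial, coeff_monomial_mul, one_mul, coeff_pow,
      if_pos hc, if_pos (by omega)]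
  · rw [X_pow_eq_monomial, coeff_monomial_mul', if_neg, if_neg hc]
    intro hle
    exact hc (by simpa using Finsupp.le_def.mp hle 1)

lemma entry_eq (a b : ℝ) (n m l : ℕ) (hm : m ≤ n) (hl : l ≤ n) :
    MvPolynomial.coeff (Finsupp.single 0 (n - m) + Finsupp.single 1 m)
      ((X 0 + C a * X 1) ^ (n - l) * (X 0 + C b * X 1) ^ l : MvPolynomial (Fin 2) ℝ)
      = ∑ k ∈ range (n + 1),
          (if k ≤ m then ((n - k).choose (m - k) : ℝ) * a ^ (m - k) else 0) *
          (if k ≤ l then (l.choose k : ℝ) * (b - a) ^ k else 0) := by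
  have hb : (X 0 + C b * X 1 : MvPolynomial (Fin 2) ℝ)
      = C (b - a) * X 1 + (X 0 + C a * X 1) := by
    rw [map_sub]; ring
  have h2 : (C (b - a) * X 1 + (X 0 + C a * X 1) : MvPolynomial (Fin 2) ℝ) ^ l
      = ∑ k ∈ range (l + 1),
          (C (b - a) * X 1) ^ k * (X 0 + C a * X 1) ^ (l - k) * (l.choose k : MvPolynomial (Fin 2) ℝ) :=
    add_pow _ _ _
  rw [hb, h2, Finset.mul_sum, MvPolynomial.coeff_sum]
  have hterm : ∀ k ∈ range (l + 1),
      MvPolynomial.coeff (Finsupp.single 0 (n - m) + Finsupp.single 1 m)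
        ((X 0 + C a * X 1 : MvPolynomial (Fin 2) ℝ) ^ (n - l) *
          ((C (b - a) * X 1) ^ k * (X 0 + C a * X 1) ^ (l - k) * (l.choose k : MvPolynomial (Fin 2) ℝ)))
      = (if k ≤ m then ((n - k).choose (m - k) : ℝ) * a ^ (m - k) else 0) *
          ((l.choose k : ℝ) * (b - a) ^ k) := by
    intro k hk
    have hkl : k ≤ l := by have := Finset.mem_range.1 hk; omega
    have hre : (X 0 + C a * X 1 : MvPolynomial (Fin 2) ℝ) ^ (n - l) *
          ((C (b - a) * X 1) ^ k * (X 0 + C a * X 1) ^ (l - k) * (l.choose k : MvPolynomial (Fin 2) ℝ))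
        = C ((l.choose k : ℝ) * (b - a) ^ k) * ((X 1) ^ k * (X 0 + C a * X 1) ^ (n - k)) := by
      rw [mul_pow, ← C_pow,
        show ((l.choose k : MvPolynomial (Fin 2) ℝ)) = C ((l.choose k : ℝ)) by simp,
        show n - k = (n - l) + (l - k) by omega, pow_add, map_mul]
      ring
    rw [hre, coeff_C_mul, coeff_X1pow_mul a n m k hm]
    ring
  rw [Finset.sum_congr rfl hterm]
  have step1 : ∀ k ∈ range (l + 1),
      (if k ≤ m then ((n - k).choose (m - k) : ℝ) * a ^ (m - k) else 0) *
          ((l.choose k : ℝ) * (b - a) ^ k)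
      = (if k ≤ m then ((n - k).choose (m - k) : ℝ) * a ^ (m - k) else 0) *
          (if k ≤ l then (l.choose k : ℝ) * (b - a) ^ k else 0) := by
    intro k hk
    have hkl : k ≤ l := by have := Finset.mem_range.1 hk; omega
    simp [hkl]
  rw [Finset.sum_congr rfl step1]
  refine Finset.sum_subset (Finset.range_subset_range.2 (by omega)) fun k _ hk => ?_
  have hkl : ¬ k ≤ l := by simp only [Finset.mem_range] at hk; omega
  simp [hkl]

theorem transverse_coefficient_matrix_det (i : ℕ) (hi : 1 ≤ i) (α β : ℝ) :
    Matrix.det (Matrix.of fun m l : Fin i =>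
        MvPolynomial.coeff
          (Finsupp.single 0 (i - 1 - (m : ℕ)) + Finsupp.single 1 (m : ℕ))
          ((MvPolynomial.X 0 + MvPolynomial.C (2 * α) * MvPolynomial.X 1)
              ^ (i - 1 - (l : ℕ)) *
            (MvPolynomial.X 0 + MvPolynomial.C (2 * β) * MvPolynomial.X 1)
              ^ (l : ℕ) : MvPolynomial (Fin 2) ℝ))
      = (2 * β - 2 * α) ^ (i * (i - 1) / 2) ∧
    (α ≠ β → IsUnit (Matrix.of fun m l : Fin i =>
        MvPolynomial.coeff
          (Finsupp.single 0 (i - 1 - (m : ℕ)) + Finsupp.single 1 (m : ℕ))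
          ((MvPolynomial.X 0 + MvPolynomial.C (2 * α) * MvPolynomial.X 1)
              ^ (i - 1 - (l : ℕ)) *
            (MvPolynomial.X 0 + MvPolynomial.C (2 * β) * MvPolynomial.X 1)
              ^ (l : ℕ) : MvPolynomial (Fin 2) ℝ))) := by
  set M : Matrix (Fin i) (Fin i) ℝ := Matrix.of fun m l : Fin i =>
        MvPolynomial.coeff
          (Finsupp.single 0 (i - 1 - (m : ℕ)) + Finsupp.single 1 (m : ℕ))
          ((MvPolynomial.X 0 + MvPolynomial.C (2 * α) * MvPolynomial.X 1)
              ^ (i - 1 - (l : ℕ)) *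
            (MvPolynomial.X 0 + MvPolynomial.C (2 * β) * MvPolynomial.X 1)
              ^ (l : ℕ) : MvPolynomial (Fin 2) ℝ) with hM
  set Q : Matrix (Fin i) (Fin i) ℝ := Matrix.of fun m k : Fin i =>
      if (k : ℕ) ≤ (m : ℕ) then (((i - 1 - (k : ℕ)).choose ((m : ℕ) - k)) : ℝ) * (2 * α) ^ ((m : ℕ) - k) else 0 with hQ
  set T : Matrix (Fin i) (Fin i) ℝ := Matrix.of fun k l : Fin i =>
      if (k : ℕ) ≤ (l : ℕ) then (((l : ℕ).choose (k : ℕ)) : ℝ) * (2 * β - 2 * α) ^ (k : ℕ) else 0 with hT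
  have hMQT : M = Q * T := by
    ext m l
    have hm : (m : ℕ) ≤ i - 1 := by have := m.isLt; omega
    have hl : (l : ℕ) ≤ i - 1 := by have := l.isLt; omega
    have := entry_eq (2 * α) (2 * β) (i - 1) (m : ℕ) (l : ℕ) hm hl
    rw [hM, Matrix.mul_apply]
    show MvPolynomial.coeff _ _ = _
    rw [this, show i - 1 + 1 = i by omega, ← Fin.sum_univ_eq_sum_range
      (fun k => (if k ≤ (m : ℕ) then (((i - 1 - k).choose ((m : ℕ) - k)) : ℝ) * (2 * α) ^ ((m : ℕ) - k) else 0) *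
          (if k ≤ (l : ℕ) then (((l : ℕ).choose k) : ℝ) * (2 * β - 2 * α) ^ k else 0)) i]
    rfl
  have hdetQ : Q.det = 1 := by
    rw [Matrix.det_of_lowerTriangular Q (fun m k hmk => by
      simp only [hQ, Matrix.of_apply]
      rw [if_neg (by exact_mod_cast not_le.2 (by exact_mod_cast hmk))])]
    refine Finset.prod_eq_one fun m _ => ?_
    simp [hQ]
  have hdetT : T.det = (2 * β - 2 * α) ^ (i * (i - 1) / 2) := by
    rw [Matrix.det_of_upperTriangular (show T.BlockTriangular id from fun k l hkl => by
      simp only [hT, Matrix.of_apply]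
      rw [if_neg (by exact_mod_cast not_le.2 (by exact_mod_cast hkl))])]
    have : ∀ k : Fin i, T k k = (2 * β - 2 * α) ^ (k : ℕ) := by
      intro k; simp [hT]
    rw [Finset.prod_congr rfl fun k _ => this k, Finset.prod_pow_eq_pow_sum]
    congr 1
    rw [Fin.sum_univ_eq_sum_range (fun k => k) i, Finset.sum_range_id]
  have hdet : M.det = (2 * β - 2 * α) ^ (i * (i - 1) / 2) := by
    rw [hMQT, Matrix.det_mul, hdetQ, hdetT, one_mul]
  refine ⟨hdet, fun hab => ?_⟩
  rw [Matrix.isUnit_iff_isUnit_det, hdet]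
  exact (isUnit_iff_ne_zero.2 (pow_ne_zero _ (by intro h; apply hab; linarith)))
end

section
/- Let k ≥ 1 and let α, β be distinct real numbers. Then there exist real numbers w₁, …, w_{2k} and c such that the polynomial q(t) = t^{2k+2} − Σ_{i=1}^{2k} w_i t^i − c satisfies q^{(l)}(α) = q^{(l)}(β) = 0 for all l = 1, …, k. (Note that the coefficient of t^{2k+1} in q is required to be zero.) -/
open Polynomial

lemma iteratedDeriv_polyeval (p : ℝ[X]) (n : ℕ) :
    iteratedDeriv n (fun x : ℝ => p.eval x) = fun x : ℝ => ((derivative^[n] p).eval x) := by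
  induction n with
  | zero => simp
  | succ n ih =>
    rw [iteratedDeriv_succ, ih, Function.iterate_succ_apply']
    funext x
    exact Polynomial.deriv (p := derivative^[n] p)

theorem even_monic_with_flat_points (k : ℕ) (hk : 1 ≤ k) (α β : ℝ) (hαβ : α ≠ β) :
    ∃ (w : Fin (2 * k) → ℝ) (c : ℝ),
      ∀ l : ℕ, 1 ≤ l → l ≤ k →
        iteratedDeriv l
            (fun t : ℝ => t ^ (2 * k + 2) - (∑ i, w i * t ^ ((i : ℕ) + 1)) - c) α = 0 ∧
        iteratedDeriv l
            (fun t : ℝ => t ^ (2 * k + 2) - (∑ i, w i * t ^ ((i : ℕ) + 1)) - c) β = 0 := by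
  set M : ℝ[X] := (X - C α) ^ k * (X - C β) ^ k * (X + C (k * (α + β))) with hM
  have hMmonic : M.Monic :=
    (((monic_X_sub_C α).pow k).mul ((monic_X_sub_C β).pow k)).mul (monic_X_add_C _)
  have hMdeg : M.natDegree = 2 * k + 1 := by
    rw [hM, (((monic_X_sub_C α).pow k).mul ((monic_X_sub_C β).pow k)).natDegree_mul
        (monic_X_add_C _), ((monic_X_sub_C α).pow k).natDegree_mul ((monic_X_sub_C β).pow k),
      natDegree_pow, natDegree_pow, natDegree_X_sub_C, natDegree_X_sub_C, natDegree_X_add_C]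
    ring
  have hMnext : M.nextCoeff = 0 := by
    rw [hM, (((monic_X_sub_C α).pow k).mul ((monic_X_sub_C β).pow k)).nextCoeff_mul
        (monic_X_add_C _), ((monic_X_sub_C α).pow k).nextCoeff_mul ((monic_X_sub_C β).pow k),
      (monic_X_sub_C α).nextCoeff_pow, (monic_X_sub_C β).nextCoeff_pow,
      nextCoeff_X_sub_C, nextCoeff_X_sub_C, nextCoeff_X_add_C]
    simp only [nsmul_eq_mul]
    ring
  set P : ℝ[X] := C ((2 * k + 2 : ℝ)) * M with hP
  have hc0 : ((2 * k + 2 : ℝ)) ≠ 0 := by positivity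
  have hPdeg : P.natDegree = 2 * k + 1 := by
    rw [hP, natDegree_C_mul hc0, hMdeg]
  have hPne : P ≠ 0 := mul_ne_zero (C_ne_zero.mpr hc0) hMmonic.ne_zero
  have hPtop : P.coeff (2 * k + 1) = 2 * k + 2 := by
    rw [hP, coeff_C_mul]
    have : M.coeff (2 * k + 1) = 1 := by rw [← hMdeg]; exact hMmonic.coeff_natDegree
    rw [this, mul_one]
  have hPsub : P.coeff (2 * k) = 0 := by
    rw [hP, coeff_C_mul]
    have h1 : M.coeff (2 * k) = M.nextCoeff := by
      rw [nextCoeff_of_natDegree_pos (by omega), hMdeg, Nat.add_sub_cancel]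
    rw [h1, hMnext, mul_zero]
  set Q : ℝ[X] := ∑ n ∈ Finset.range (2 * k + 2), C (P.coeff n / (n + 1)) * X ^ (n + 1) with hQ
  have hQderiv : derivative Q = P := by
    rw [hQ, derivative_sum]
    have h2 : ∀ n ∈ Finset.range (2 * k + 2),
        derivative (C (P.coeff n / (n + 1)) * X ^ (n + 1)) = C (P.coeff n) * X ^ n := by
      intro n _
      rw [derivative_C_mul_X_pow]
      have h1 : ((n : ℝ) + 1) ≠ 0 := by positivity
      push_cast
      rw [div_mul_cancel₀ _ h1]
    rw [Finset.sum_congr rfl h2]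
    conv_rhs => rw [P.as_sum_range' (2 * k + 2) (by omega)]
    simp [C_mul_X_pow_eq_monomial]
  set w : Fin (2 * k) → ℝ := fun i => -(P.coeff i / (i + 1)) with hw
  refine ⟨w, 0, ?_⟩
  have hfun : (fun t : ℝ => t ^ (2 * k + 2) - (∑ i, w i * t ^ ((i : ℕ) + 1)) - 0)
      = fun t => Q.eval t := by
    funext t
    rw [hQ]
    simp only [eval_finset_sum, eval_mul, eval_C, eval_pow, eval_X]
    rw [Finset.sum_range_succ, Finset.sum_range_succ, hPtop, hPsub]
    have h2 : ((2 * k + 1 : ℕ) : ℝ) + 1 = (2 * k + 2 : ℝ) := by push_cast; ring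
    rw [h2, div_self hc0]
    have hsum : (∑ i : Fin (2 * k), w i * t ^ ((i : ℕ) + 1))
        = ∑ n ∈ Finset.range (2 * k), -(P.coeff n / (n + 1)) * t ^ (n + 1) :=
      Fin.sum_univ_eq_sum_range (fun n => -(P.coeff n / (n + 1)) * t ^ (n + 1)) (2 * k)
    rw [hsum]
    simp only [neg_mul, Finset.sum_neg_distrib, zero_div, zero_mul, add_zero, one_mul]
    ring
  rw [hfun]
  intro l hl1 hlk
  obtain ⟨j, rfl⟩ : ∃ j, l = j + 1 := ⟨l - 1, by omega⟩
  rw [iteratedDeriv_polyeval, Function.iterate_succ_apply, hQderiv]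
  have hα : (X - C α) ^ k ∣ P := ((dvd_mul_right _ _).mul_right _).mul_left _
  have hβ : (X - C β) ^ k ∣ P := ((dvd_mul_left _ _).mul_right _).mul_left _
  constructor
  · apply isRoot_iterate_derivative_of_lt_rootMultiplicity
    have : k ≤ P.rootMultiplicity α := (le_rootMultiplicity_iff hPne).2 hα
    omega
  · apply isRoot_iterate_derivative_of_lt_rootMultiplicity
    have : k ≤ P.rootMultiplicity β := (le_rootMultiplicity_iff hPne).2 hβ
    omega
end
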